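/- Let A → B be a homomorphism of commutative rings and π : B → C a surjective A-algebra homomorphism with kernel I. Assume that C is formally smooth as an A-algebra. Then the conormal sequence 0 → I/I² → C ⊗_B Ω_{B/A} → Ω_{C/A} → 0 is a split exact sequence of C-modules. -/
import Mathlib


open TensorProduct

universe u

/-- If `B → C` is a surjective `A`-algebra homomorphism with kernel `I` and `C`
is formally smooth over `A`, then the conormal sequence
`0 → I/I² → C ⊗_B Ω_{B/A} → Ω_{C/A} → 0` is a split exact sequence of `C`-modules:
the first map (from `I/I²` to `C ⊗_B Ω_{B/A}`) is injective, the sequence is exact in the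
middle, the second map is surjective, and there is a `C`-linear splitting. -/
theorem stmt_7 (A B C : Type u) [CommRing A] [CommRing B] [CommRing C]
    [Algebra A B] [Algebra A C] [Algebra B C] [IsScalarTower A B C]
    (hsurj : Function.Surjective (algebraMap B C))
    [Algebra.FormallySmooth A C] :
    Function.Injective (KaehlerDifferential.kerCotangentToTensor A B C) ∧
    Function.Exact (KaehlerDifferential.kerCotangentToTensor A B C)
      (KaehlerDifferential.mapBaseChange A B C) ∧
    Function.Surjective (KaehlerDifferential.mapBaseChange A B C) ∧
    ∃ s : KaehlerDifferential A C →ₗ[C] C ⊗[B] KaehlerDifferential A B,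
      ∀ y, KaehlerDifferential.mapBaseChange A B C (s y) = y := by
  classical
  have hexact := KaehlerDifferential.exact_kerCotangentToTensor_mapBaseChange A B C hsurj
  have hmsurj := KaehlerDifferential.mapBaseChange_surjective A B C hsurj
  -- Build an algebra section of `B ⧸ I² → C` using formal smoothness of `C`.
  set f := IsScalarTower.toAlgHom A B C with hf
  have hsurj2 : Function.Surjective f.kerSquareLift := by
    intro x
    obtain ⟨b, hb⟩ := hsurj x
    exact ⟨Ideal.Quotient.mk _ b, hb⟩
  have hnil : IsNilpotent (RingHom.ker f.kerSquareLift.toRingHom) :=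
    ⟨2, by rw [AlgHom.ker_kerSquareLift]; exact Ideal.cotangentIdeal_square _⟩
  have hg := Algebra.FormallySmooth.comp_liftOfSurjective (R := A)
    (AlgHom.id A C) f.kerSquareLift hsurj2 hnil
  -- A retraction of `kerCotangentToTensor` coming from the section.
  obtain ⟨l, hl⟩ := (retractionKerCotangentToTensorEquivSection
    (R := A) (P := B) (S := C) hsurj).symm
    ⟨Algebra.FormallySmooth.liftOfSurjective (AlgHom.id A C) f.kerSquareLift hsurj2 hnil, hg⟩
  have hinj : Function.Injective (KaehlerDifferential.kerCotangentToTensor A B C) :=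
    Function.LeftInverse.injective (g := l) fun x => LinearMap.congr_fun hl x
  refine ⟨hinj, hexact, hmsurj, ?_⟩
  -- Splitting: use the splitting lemma over `B`, then upgrade to `C`-linearity.
  have hexact' : Function.Exact (KaehlerDifferential.kerCotangentToTensor A B C)
      ((KaehlerDifferential.mapBaseChange A B C).restrictScalars B) := hexact
  have hmsurj' : Function.Surjective
      ((KaehlerDifferential.mapBaseChange A B C).restrictScalars B) := hmsurj
  have h10 := hexact'.split_tfae'.out 1 0
  obtain ⟨-, l', hl'⟩ := h10.mp ⟨hmsurj', l, hl⟩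
  refine ⟨l'.extendScalarsOfSurjective hsurj, fun y => ?_⟩
  exact LinearMap.congr_fun hl' y
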